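/- Let V be a real vector space and X ⊆ V a subset of cardinality strictly less than the continuum, and let V₀ be a 2-dimensional linear subspace of V. Then there exists a linear projection P : V → V with range V₀ such that the restriction of P to X is injective and both P restricted to X and its inverse preserve betweenness. -/

import Mathlib

open Module Submodule Polynomial

namespace Stmt0Aux

variable {V : Type*} [AddCommGroup V] [Module ℝ V]

/-- The invariant for Zorn's lemma: a partial linear map `f : V →ₗ. V₀` which contains
`V₀` in its domain, is the identity on `V₀`, and whose kernel avoids (the relevant parts of)
all planes spanned by triples of `X`. -/
def Good (X : Set V) (V₀ : Submodule ℝ V) (f : V →ₗ.[ℝ] V₀) : Prop :=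
  V₀ ≤ f.domain ∧ (∀ (v : V) (h : v ∈ f.domain), ((f ⟨v, h⟩ : V₀) : V) = v ∨ v ∉ V₀) ∧
  ∀ a ∈ X, ∀ b ∈ X, ∀ x ∈ X, ∀ β γ : ℝ,
    ∀ h : β • (x - a) + γ • (a - b) ∈ f.domain,
      f ⟨β • (x - a) + γ • (a - b), h⟩ = 0 → β • (x - a) + γ • (a - b) = 0

set_option maxHeartbeats 1000000 in
theorem badset_finite (V₀ : Submodule ℝ V) [FiniteDimensional ℝ V₀]
    (hV₀ : Module.finrank ℝ V₀ = 2) (bb : Basis (Fin 2) ℝ V₀)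
    (f : V →ₗ.[ℝ] V₀) (x₀ : V) (hx₀ : x₀ ∉ f.domain) (a b x : V) :
    Set.Finite {t : ℝ | ∃ (d : V) (hd : d ∈ f.domain) (r β γ : ℝ), r ≠ 0 ∧
      β • (x - a) + γ • (a - b) = d + r • x₀ ∧
      f ⟨d, hd⟩ + r • (t • bb 0 + t ^ 2 • bb 1) = 0} := by
  classical
  set D := f.domain with hD
  set q : V →ₗ[ℝ] V ⧸ D := D.mkQ with hq
  have hxb : q x₀ ≠ 0 := by
    intro h
    exact hx₀ ((Submodule.Quotient.mk_eq_zero D).1 (by simpa [hq] using h))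
  set s : ℝ × ℝ →ₗ[ℝ] V :=
    LinearMap.coprod (LinearMap.toSpanSingleton ℝ V (x - a))
      (LinearMap.toSpanSingleton ℝ V (a - b)) with hs
  have hs_apply : ∀ β γ : ℝ, s (β, γ) = β • (x - a) + γ • (a - b) := fun β γ => rfl
  set W : Submodule ℝ (ℝ × ℝ) := (D ⊔ ℝ ∙ x₀).comap s with hW
  have hmemW : ∀ w : W, q (s (w : ℝ × ℝ)) ∈ (ℝ ∙ (q x₀)) := by
    rintro ⟨w, hw⟩
    have hw' : s w ∈ D ⊔ ℝ ∙ x₀ := hw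
    rcases mem_sup.1 hw' with ⟨d, hd, y, hy, hdy⟩
    rcases mem_span_singleton.1 hy with ⟨r, rfl⟩
    have : q (s w) = r • q x₀ := by
      rw [← hdy]
      simp only [map_add, map_smul]
      have : q d = 0 := (Submodule.Quotient.mk_eq_zero D).2 hd
      rw [hq] at *
      simp [Submodule.mkQ_apply] at this ⊢
      simp [this]
    rw [this]
    exact smul_mem _ _ (mem_span_singleton_self _)
  set ρ : W →ₗ[ℝ] ↥(ℝ ∙ (q x₀)) :=
    LinearMap.codRestrict _ (q ∘ₗ s ∘ₗ W.subtype) hmemW with hρ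
  set ee := LinearEquiv.toSpanNonzeroSingleton ℝ (V ⧸ D) (q x₀) hxb with hee
  set c : W →ₗ[ℝ] ℝ := ee.symm.toLinearMap ∘ₗ ρ with hc
  have hcdef : ∀ w : W, q (s (w : ℝ × ℝ)) = c w • q x₀ := by
    intro w
    have h1 : ee (c w) = ρ w := ee.apply_symm_apply (ρ w)
    have h2 := congrArg (Subtype.val) h1
    have h3 : ((ρ w : _) : V ⧸ D) = q (s w) := rfl
    rw [← h3]
    simpa [hee, LinearEquiv.toSpanNonzeroSingleton_apply] using h2.symm
  set χ : W →ₗ[ℝ] V :=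
    (s ∘ₗ W.subtype) - (LinearMap.toSpanSingleton ℝ V x₀ ∘ₗ c) with hχ
  have hχmem : ∀ w : W, χ w ∈ D := by
    intro w
    have : q (χ w) = 0 := by
      simp only [hχ, LinearMap.sub_apply, LinearMap.comp_apply, map_sub,
        Submodule.subtype_apply]
      rw [LinearMap.toSpanSingleton_apply, map_smul, hcdef w]
      simp
    rw [hq] at this
    simpa [Submodule.mkQ_apply, Submodule.Quotient.mk_eq_zero] using this
  set χD : W →ₗ[ℝ] D := LinearMap.codRestrict D χ hχmem with hχD
  set ψ : W →ₗ[ℝ] ↥V₀ × ℝ := (f.toFun ∘ₗ χD).prod c with hψ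
  set T : Submodule ℝ (↥V₀ × ℝ) := LinearMap.range ψ with hT
  have hTne : T ≠ ⊤ := by
    intro htop
    have h1 : Module.finrank ℝ T ≤ Module.finrank ℝ W := LinearMap.finrank_range_le ψ
    have h2 : Module.finrank ℝ W ≤ Module.finrank ℝ (ℝ × ℝ) := W.finrank_le
    have h3 : Module.finrank ℝ (ℝ × ℝ) = 2 := by
      simp [Module.finrank_prod]
    have h4 : Module.finrank ℝ T = 3 := by
      rw [htop, finrank_top, Module.finrank_prod, hV₀, Module.finrank_self]
    omega
  obtain ⟨φ, hφ0, hφmap⟩ :=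
    Submodule.exists_dual_map_eq_bot_of_lt_top (lt_top_iff_ne_top.2 hTne) inferInstance
  have hφT : ∀ v ∈ T, φ v = 0 := by
    intro v hv
    have : φ v ∈ T.map φ := mem_map_of_mem hv
    rw [hφmap] at this
    simpa using this
  -- spanning fact
  have hspan : Submodule.span ℝ
      ({((bb 0 : V₀), (0 : ℝ)), ((bb 1 : V₀), (0 : ℝ)), ((0 : V₀), (-1 : ℝ))} :
        Set (↥V₀ × ℝ)) = ⊤ := by
    rw [eq_top_iff]
    rintro ⟨m, r⟩ -
    have hm : (bb.repr m 0) • bb 0 + (bb.repr m 1) • bb 1 = m := by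
      have := bb.sum_repr m
      rw [Fin.sum_univ_two] at this; exact this
    have : ((m, r) : ↥V₀ × ℝ) =
        (bb.repr m 0) • ((bb 0 : V₀), (0 : ℝ)) + (bb.repr m 1) • ((bb 1 : V₀), (0 : ℝ)) +
          (-r) • ((0 : V₀), (-1 : ℝ)) := by
      simp only [Prod.smul_mk, Prod.mk_add_mk, smul_zero, add_zero, zero_add,
        Prod.mk.injEq, smul_eq_mul]
      exact ⟨hm.symm, by norm_num⟩
    rw [this]
    refine add_mem (add_mem ?_ ?_) ?_ <;>
      exact smul_mem _ _ (subset_span (by simp))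
  -- the polynomial
  set p : Polynomial ℝ := Polynomial.C (φ (0, -1)) + Polynomial.C (φ (bb 0, 0)) * Polynomial.X +
    Polynomial.C (φ (bb 1, 0)) * Polynomial.X ^ 2 with hp
  have hpne : p ≠ 0 := by
    intro h0
    have hc0 : φ ((0 : V₀), (-1 : ℝ)) = 0 := by
      have := congrArg (fun pp => Polynomial.coeff pp 0) h0
      simpa [hp, coeff_add, coeff_C, coeff_C_mul, coeff_X_pow] using this
    have hc1 : φ ((bb 0 : V₀), (0 : ℝ)) = 0 := by
      have := congrArg (fun pp => Polynomial.coeff pp 1) h0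
      simpa [hp, coeff_add, coeff_C, coeff_C_mul, coeff_X_pow] using this
    have hc2 : φ ((bb 1 : V₀), (0 : ℝ)) = 0 := by
      have := congrArg (fun pp => Polynomial.coeff pp 2) h0
      simpa [hp, coeff_add, coeff_C, coeff_C_mul, coeff_X_pow] using this
    have : φ = 0 := by
      apply LinearMap.ext_on hspan
      intro v hv
      simp only [Set.mem_insert_iff, Set.mem_singleton_iff] at hv
      rcases hv with rfl | rfl | rfl <;> simpa
    exact hφ0 this
  apply Set.Finite.subset (Polynomial.finite_setOf_isRoot hpne)
  rintro t ⟨d, hd, r, β, γ, hr, hsum, hval⟩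
  -- build the witness w ∈ W
  have hwmem : ((β, γ) : ℝ × ℝ) ∈ W := by
    show s (β, γ) ∈ D ⊔ ℝ ∙ x₀
    rw [hs_apply, hsum]
    exact add_mem (le_sup_left (α := Submodule ℝ V) hd)
      (le_sup_right (α := Submodule ℝ V) (smul_mem _ _ (mem_span_singleton_self _)))
  set w : W := ⟨(β, γ), hwmem⟩ with hw
  have hsw : s (w : ℝ × ℝ) = d + r • x₀ := by rw [hw]; rw [hs_apply] at *; exact hsum
  have hcw : c w = r := by
    have h1 : q (s (w : ℝ × ℝ)) = r • q x₀ := by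
      rw [hsw]
      have : q d = 0 := by
        rw [hq]; simpa [Submodule.mkQ_apply, Submodule.Quotient.mk_eq_zero] using hd
      simp [map_add, map_smul, this]
    have h2 := hcdef w
    rw [h1] at h2
    have := sub_smul (r) (c w) (q x₀)
    have h3 : (r - c w) • q x₀ = 0 := by rw [sub_smul, h2]; abel
    rcases smul_eq_zero.1 h3 with h | h
    · exact (sub_eq_zero.1 h).symm
    · exact absurd h hxb
  have hχw : χ w = d := by
    have : χ w = s (w : ℝ × ℝ) - c w • x₀ := by
      simp [hχ, LinearMap.toSpanSingleton_apply]
    rw [this, hsw, hcw]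
    abel
  have hψw : ψ w = (f ⟨d, hd⟩, r) := by
    have h1 : χD w = ⟨d, hd⟩ := Subtype.ext (by simpa [hχD] using hχw)
    simp only [hψ, LinearMap.prod_apply, LinearMap.comp_apply, Pi.prod, Function.prod, h1, hcw]
    rw [LinearPMap.toFun_eq_coe]
  have hTmem : ((t • bb 0 + t ^ 2 • bb 1, (-1 : ℝ)) : ↥V₀ × ℝ) ∈ T := by
    have h1 : ψ w ∈ T := LinearMap.mem_range_self ψ w
    have h2 : f ⟨d, hd⟩ = -(r • (t • bb 0 + t ^ 2 • bb 1)) := by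
      rw [eq_neg_iff_add_eq_zero]; exact hval
    have h3 : (-r⁻¹) • ψ w = ((t • bb 0 + t ^ 2 • bb 1, (-1 : ℝ)) : ↥V₀ × ℝ) := by
      rw [hψw, h2, Prod.smul_mk]
      congr 1
      · rw [smul_neg, smul_smul]
        field_simp
        simp
        exact add_comm _ _
      · rw [smul_eq_mul]; field_simp
    rw [← h3]
    exact T.smul_mem _ h1
  -- conclude: t is a root of p
  have hzero := hφT _ hTmem
  have hdecomp : ((t • bb 0 + t ^ 2 • bb 1, (-1 : ℝ)) : ↥V₀ × ℝ) =
      t • ((bb 0 : V₀), (0 : ℝ)) + (t ^ 2) • ((bb 1 : V₀), (0 : ℝ)) + ((0 : V₀), (-1 : ℝ)) := by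
    rw [Prod.ext_iff]; constructor <;> simp
  rw [hdecomp] at hzero
  simp only [map_add, map_smul, smul_eq_mul] at hzero
  show p.IsRoot t
  simp only [hp, IsRoot, eval_add, eval_mul, eval_C, eval_X, eval_pow]
  linarith [hzero]

set_option maxHeartbeats 1000000 in
theorem extend_good {X : Set V} (hX : Cardinal.mk X < Cardinal.continuum)
    {V₀ : Submodule ℝ V} [FiniteDimensional ℝ V₀] (hV₀ : Module.finrank ℝ V₀ = 2)
    {f : V →ₗ.[ℝ] V₀} (hf : Good X V₀ f) {x₀ : V} (hx₀ : x₀ ∉ f.domain) :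
    ∃ g : V →ₗ.[ℝ] V₀, f ≤ g ∧ x₀ ∈ g.domain ∧ Good X V₀ g := by
  classical
  set bb : Basis (Fin 2) ℝ V₀ := Module.finBasisOfFinrankEq ℝ V₀ hV₀ with hbb
  set B : ↥X × ↥X × ↥X → Set ℝ := fun τ =>
    {t : ℝ | ∃ (d : V) (hd : d ∈ f.domain) (r β γ : ℝ), r ≠ 0 ∧
      β • ((τ.2.2 : V) - (τ.1 : V)) + γ • ((τ.1 : V) - (τ.2.1 : V)) = d + r • x₀ ∧
      f ⟨d, hd⟩ + r • (t • bb 0 + t ^ 2 • bb 1) = 0} with hB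
  have hBfin : ∀ τ, (B τ).Finite := fun τ =>
    badset_finite V₀ hV₀ bb f x₀ hx₀ _ _ _
  have hcard : Cardinal.mk (⋃ τ, B τ) < Cardinal.continuum := by
    have h1 : Cardinal.mk (↥X × ↥X × ↥X) < Cardinal.continuum := by
      have := Cardinal.mul_lt_of_lt Cardinal.aleph0_le_continuum hX
        (Cardinal.mul_lt_of_lt Cardinal.aleph0_le_continuum hX hX)
      simpa [Cardinal.mk_prod] using this
    rw [← Cardinal.lift_lt_continuum]
    refine lt_of_le_of_lt (Cardinal.mk_iUnion_le_lift B) ?_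
    have h2 : ⨆ τ, Cardinal.lift (Cardinal.mk (B τ)) ≤ Cardinal.aleph0 :=
      ciSup_le' fun τ => by
        rw [← Cardinal.lift_aleph0]
        exact Cardinal.lift_le.2 ((hBfin τ).lt_aleph0).le
    calc Cardinal.lift (Cardinal.mk (↥X × ↥X × ↥X)) * ⨆ τ, Cardinal.lift (Cardinal.mk (B τ))
        ≤ Cardinal.lift (Cardinal.mk (↥X × ↥X × ↥X)) * Cardinal.aleph0 :=
          by gcongr
      _ < Cardinal.continuum :=
          Cardinal.mul_lt_of_lt Cardinal.aleph0_le_continuum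
            (Cardinal.lift_lt_continuum.2 h1) Cardinal.aleph0_lt_continuum
  have hex : ∃ t : ℝ, t ∉ ⋃ τ, B τ := by
    by_contra hco
    push_neg at hco
    have hsub : (Set.univ : Set ℝ) ⊆ ⋃ τ, B τ := fun t _ => hco t
    have hle := Cardinal.mk_le_mk_of_subset hsub
    rw [Cardinal.mk_univ, Cardinal.mk_real] at hle
    exact absurd (hle.trans_lt hcard) (lt_irrefl _)
  obtain ⟨t, ht⟩ := hex
  set z : ↥V₀ := t • bb 0 + t ^ 2 • bb 1 with hz
  refine ⟨f.supSpanSingleton x₀ z hx₀, f.left_le_sup _ _, ?_, ?_, ?_, ?_⟩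
  · rw [LinearPMap.domain_supSpanSingleton]
    exact le_sup_right (α := Submodule ℝ V) (mem_span_singleton_self _)
  · rw [LinearPMap.domain_supSpanSingleton]
    exact le_trans hf.1 le_sup_left
  · -- identity on V₀
    intro v h
    by_cases hv : v ∈ V₀
    · have hvf : v ∈ f.domain := hf.1 hv
      have heq : f.supSpanSingleton x₀ z hx₀ ⟨v, h⟩ = f ⟨v, hvf⟩ :=
        ((f.left_le_sup _ _).2 (x := ⟨v, hvf⟩) (y := ⟨v, h⟩) rfl).symm
      rcases hf.2.1 v hvf with h' | h'
      · left; rw [heq]; exact h'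
      · exact absurd hv h'
    · right; exact hv
  · -- the plane constraint
    intro a ha b hb x hx β γ h hval
    set s₀ : V := β • (x - a) + γ • (a - b) with hs₀
    have h' : s₀ ∈ f.domain ⊔ ℝ ∙ x₀ := by
      rwa [LinearPMap.domain_supSpanSingleton] at h
    rcases mem_sup.1 h' with ⟨d, hd, y, hy, hdy⟩
    rcases mem_span_singleton.1 hy with ⟨r, rfl⟩
    have happ : f.supSpanSingleton x₀ z hx₀ ⟨s₀, h⟩ = f ⟨d, hd⟩ + r • z := by
      have e1 : (⟨s₀, h⟩ : ↥(f.supSpanSingleton x₀ z hx₀).domain) =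
          ⟨d + r • x₀, mem_sup.2 ⟨d, hd, _, mem_span_singleton.2 ⟨r, rfl⟩, rfl⟩⟩ :=
        Subtype.ext hdy.symm
      rw [e1, LinearPMap.supSpanSingleton_apply_mk]
      rfl
    rw [happ] at hval
    by_cases hr : r = 0
    · subst hr
      rw [zero_smul, add_zero] at hval
      have hsd : s₀ = d := by rw [← hdy, zero_smul, add_zero]
      have hd' : s₀ ∈ f.domain := hsd ▸ hd
      refine hf.2.2 a ha b hb x hx β γ hd' ?_
      have e2 : (⟨s₀, hd'⟩ : ↥f.domain) = ⟨d, hd⟩ := Subtype.ext hsd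
      rw [e2]
      exact hval
    · exfalso
      apply ht
      refine Set.mem_iUnion.2 ⟨(⟨a, ha⟩, ⟨b, hb⟩, ⟨x, hx⟩), ?_⟩
      exact ⟨d, hd, r, β, γ, hr, hdy.symm, hval⟩

theorem exists_good_total (X : Set V) (hX : Cardinal.mk X < Cardinal.continuum)
    (V₀ : Submodule ℝ V) (hV₀ : Module.finrank ℝ V₀ = 2) :
    ∃ g : V →ₗ[ℝ] V₀, (∀ v ∈ V₀, ((g v : V₀) : V) = v) ∧
      ∀ a ∈ X, ∀ b ∈ X, ∀ x ∈ X, ∀ β γ : ℝ,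
        g (β • (x - a) + γ • (a - b)) = 0 → β • (x - a) + γ • (a - b) = 0 := by
  classical
  haveI : FiniteDimensional ℝ V₀ :=
    FiniteDimensional.of_finrank_pos (by rw [hV₀]; norm_num)
  set S : Set (V →ₗ.[ℝ] V₀) := {f | Good X V₀ f} with hS
  have hf₀ : (⟨V₀, LinearMap.id⟩ : V →ₗ.[ℝ] V₀) ∈ S := by
    refine ⟨le_rfl, fun v h => Or.inl rfl, ?_⟩
    intro a ha b hb x hx β γ h hval
    exact congrArg Subtype.val hval
  have hchain : ∀ c ⊆ S, IsChain (· ≤ ·) c → ∀ y ∈ c, ∃ ub ∈ S, ∀ z ∈ c, z ≤ ub := by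
    intro c hcS hch y hy
    have hdir : DirectedOn (· ≤ ·) c := hch.directedOn
    have hdom : ∀ v ∈ (LinearPMap.sSup c hdir).domain, ∃ l ∈ c, v ∈ l.domain := by
      intro v hv
      have hne : (LinearPMap.domain '' c).Nonempty := ⟨y.domain, Set.mem_image_of_mem _ hy⟩
      have hdir' : DirectedOn (· ≤ ·) (LinearPMap.domain '' c) :=
        directedOn_image.2 (hdir.mono fun f g hfg => hfg.1)
      have hv' : v ∈ sSup (LinearPMap.domain '' c) := hv
      rcases (Submodule.mem_sSup_of_directed hne hdir').1 hv' with ⟨p, ⟨l, hl, rfl⟩, hvp⟩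
      exact ⟨l, hl, hvp⟩
    refine ⟨LinearPMap.sSup c hdir, ⟨?_, ?_, ?_⟩, fun z hz => LinearPMap.le_sSup hdir hz⟩
    · exact le_trans (hcS hy).1 (LinearPMap.le_sSup hdir hy).1
    · intro v hv
      by_cases hvV : v ∈ V₀
      · rcases hdom v hv with ⟨l, hl, hvl⟩
        have heq : LinearPMap.sSup c hdir ⟨v, hv⟩ = l ⟨v, hvl⟩ :=
          LinearPMap.sSup_apply hdir hl ⟨v, hvl⟩
        rcases (hcS hl).2.1 v hvl with h' | h'
        · left; rw [heq]; exact h'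
        · exact absurd hvV h'
      · right; exact hvV
    · intro a ha b hb x hx β γ h hval
      rcases hdom _ h with ⟨l, hl, hvl⟩
      have heq : LinearPMap.sSup c hdir ⟨_, h⟩ = l ⟨_, hvl⟩ :=
        LinearPMap.sSup_apply hdir hl ⟨_, hvl⟩
      exact (hcS hl).2.2 a ha b hb x hx β γ hvl (by rw [← heq]; exact hval)
  obtain ⟨m, hm0, hmax⟩ := zorn_le_nonempty₀ S hchain _ hf₀
  have hmS : Good X V₀ m := hmax.1
  have hXm : ∀ v ∈ X, v ∈ m.domain := by
    intro v hv
    by_contra hvm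
    obtain ⟨g, hmg, hvg, hgS⟩ := extend_good hX hV₀ hmS hvm
    exact hvm ((hmax.2 hgS hmg).1 hvg)
  obtain ⟨Q, hQ⟩ := Submodule.exists_isCompl m.domain
  set pr : V →ₗ[ℝ] ↥m.domain := m.domain.linearProjOfIsCompl Q hQ with hpr
  set g : V →ₗ[ℝ] ↥V₀ := m.toFun ∘ₗ pr with hg
  have hgval : ∀ (v : V) (hv : v ∈ m.domain), g v = m ⟨v, hv⟩ := by
    intro v hv
    have h1 : pr v = ⟨v, hv⟩ :=
      Submodule.linearProjOfIsCompl_apply_left hQ ⟨v, hv⟩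
    rw [hg, LinearMap.comp_apply, h1, LinearPMap.toFun_eq_coe]
  refine ⟨g, ?_, ?_⟩
  · intro v hv
    have h1 : v ∈ m.domain := hmS.1 hv
    rcases hmS.2.1 v h1 with h' | h'
    · rw [hgval v h1]; exact h'
    · exact absurd hv h'
  · intro a ha b hb x hx β γ hval
    have hmem : β • (x - a) + γ • (a - b) ∈ m.domain :=
      add_mem (smul_mem _ _ (sub_mem (hXm x hx) (hXm a ha)))
        (smul_mem _ _ (sub_mem (hXm a ha) (hXm b hb)))
    refine hmS.2.2 a ha b hb x hx β γ hmem ?_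
    rw [← hgval _ hmem]
    exact hval

end Stmt0Aux

/-- A subset of cardinality < continuum of a real vector space can be
projected onto a 2-dimensional subspace by a linear projection that is injective on
the set and preserves betweenness in both directions. -/
theorem stmt_0 (V : Type*) [AddCommGroup V] [Module ℝ V]
    (X : Set V) (hX : Cardinal.mk X < Cardinal.continuum)
    (V₀ : Submodule ℝ V) (hV₀ : Module.finrank ℝ V₀ = 2) :
    ∃ P : V →ₗ[ℝ] V, (P ∘ₗ P = P) ∧ LinearMap.range P = V₀ ∧ Set.InjOn P X ∧
      (∀ a b x : V, a ∈ X → b ∈ X → x ∈ X →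
        (x ∈ segment ℝ a b ↔ P x ∈ segment ℝ (P a) (P b))) := by
  classical
  obtain ⟨g, hgid, hgker⟩ := Stmt0Aux.exists_good_total X hX V₀ hV₀
  set P : V →ₗ[ℝ] V := V₀.subtype ∘ₗ g with hP
  have hPval : ∀ v : V, P v = ((g v : V₀) : V) := fun v => rfl
  have hPmem : ∀ v : V, P v ∈ V₀ := fun v => (g v).2
  have hPid : ∀ v ∈ V₀, P v = v := by
    intro v hv
    rw [hPval, hgid v hv]
  -- the master "kernel avoidance" property, stated for P
  have hmaster : ∀ a ∈ X, ∀ b ∈ X, ∀ x ∈ X, ∀ β γ : ℝ,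
      P (β • (x - a) + γ • (a - b)) = 0 → β • (x - a) + γ • (a - b) = 0 := by
    intro a ha b hb x hx β γ h0
    refine hgker a ha b hb x hx β γ ?_
    rw [hPval] at h0
    exact Subtype.coe_injective (by simpa using h0)
  refine ⟨P, ?_, ?_, ?_, ?_⟩
  · -- idempotent
    ext v
    rw [LinearMap.comp_apply]
    exact hPid _ (hPmem v)
  · -- range
    apply le_antisymm
    · rintro w ⟨v, rfl⟩
      exact hPmem v
    · intro v hv
      exact ⟨v, hPid v hv⟩
  · -- injective on X
    intro x1 hx1 x2 hx2 hP12
    have h0 : P ((1 : ℝ) • (x1 - x2) + (0 : ℝ) • (x2 - x2)) = 0 := by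
      simp only [one_smul, zero_smul, add_zero, map_sub]
      rw [sub_eq_zero]
      exact hP12
    have := hmaster x2 hx2 x2 hx2 x1 hx1 1 0 h0
    simpa [sub_eq_zero] using this
  · -- betweenness both ways
    intro a b x ha hb hx
    constructor
    · rintro ⟨u, v, hu, hv, huv, rfl⟩
      exact ⟨u, v, hu, hv, huv, by simp [map_add, map_smul]⟩
    · rintro ⟨u, v, hu, hv, huv, heq⟩
      have hu' : u = 1 - v := by linarith
      have h7 : P ((1 : ℝ) • (x - a) + v • (a - b)) =
          P x - P a + (v • P a - v • P b) := by
        simp [map_add, map_sub, map_smul, smul_sub]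
      have h8 : P x - P a + (v • P a - v • P b) = 0 := by
        rw [← heq, hu']
        module
      have h9 := hmaster a ha b hb x hx 1 v (by rw [h7]; exact h8)
      refine ⟨u, v, hu, hv, huv, ?_⟩
      have h10 : u • a + v • b - x = -((1 : ℝ) • (x - a) + v • (a - b)) := by
        rw [hu']
        module
      rw [h9, neg_zero] at h10
      exact sub_eq_zero.1 h10
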